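/- Let α be a real number with 2α not an integer. Let d_1, …, d_M be distinct non-negative integers, let N be an integer with N ≥ max_j d_j, and let e_1 < e_2 < … < e_{N+1−M} be the elements of {0, 1, …, N} \ {N−d_1, …, N−d_M}. Then there exists a nonzero real constant c such that, as an identity of real polynomials in η, W[ η ↦ L_{d_1}^{(−α)}(−η), …, η ↦ L_{d_M}^{(−α)}(−η) ](η) = c · W[ L_{e_1}^{(α−N−1)}, …, L_{e_{N+1−M}}^{(α−N−1)} ](η). -/

import Mathlib

open Polynomial

open Finset

/-- The Wronskian of `n` real polynomials: `W[p₁,…,pₙ] = det(p_k^{(j-1)})`. -/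
noncomputable def polyWronskian (n : ℕ) (p : Fin n → Polynomial ℝ) : Polynomial ℝ :=
  Matrix.det (Matrix.of fun j k : Fin n =>
    (fun q : Polynomial ℝ => Polynomial.derivative q)^[(j : ℕ)] (p k))

/-- The generalized Laguerre polynomial
`L_n^{(α)}(x) = Σ_{k=0}^n ((−1)^k/k!)·((α+k+1)⋯(α+n)/(n−k)!)·x^k`. -/
noncomputable def laguerreL (α : ℝ) (n : ℕ) : Polynomial ℝ :=
  ∑ k ∈ Finset.range (n + 1),
    Polynomial.C ((-1 : ℝ) ^ k / (Nat.factorial k)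
      * (∏ i ∈ Finset.Ico (k + 1) (n + 1), (α + i)) / (Nat.factorial (n - k)))
      * X ^ k

local notation "D" => Polynomial.derivative (R := ℝ)

/-- the coefficient function -/
noncomputable def lagC (γ : ℝ) (n k : ℕ) : ℝ :=
  (-1 : ℝ) ^ k / (Nat.factorial k)
      * (∏ i ∈ Finset.Ico (k + 1) (n + 1), (γ + i)) / (Nat.factorial (n - k))

lemma laguerreL_coeff (γ : ℝ) (n k : ℕ) :
    (laguerreL γ n).coeff k = if k ≤ n then lagC γ n k else 0 := by
  unfold laguerreL lagC
  rw [finset_sum_coeff]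
  simp only [coeff_C_mul, coeff_X_pow, mul_ite, mul_one, mul_zero]
  rw [Finset.sum_ite_eq (Finset.range (n+1)) k]
  simp [Nat.lt_succ_iff]

lemma laguerreL_coeff_of_le (γ : ℝ) {n k : ℕ} (h : k ≤ n) :
    (laguerreL γ n).coeff k = lagC γ n k := by
  rw [laguerreL_coeff, if_pos h]

lemma laguerreL_coeff_of_gt (γ : ℝ) {n k : ℕ} (h : n < k) :
    (laguerreL γ n).coeff k = 0 := by
  rw [laguerreL_coeff, if_neg (by omega)]

lemma laguerreL_natDegree_le (γ : ℝ) (n : ℕ) : (laguerreL γ n).natDegree ≤ n :=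
  natDegree_le_iff_coeff_eq_zero.2 fun _ h => laguerreL_coeff_of_gt γ h

lemma laguerreL_leadingCoeff (γ : ℝ) (n : ℕ) :
    (laguerreL γ n).coeff n = (-1 : ℝ) ^ n / (Nat.factorial n) := by
  rw [laguerreL_coeff_of_le γ le_rfl]
  simp [lagC]


lemma lag_rec (γ : ℝ) (n j : ℕ) :
    ((j : ℝ) + 1) * (γ + j + 1) * (laguerreL γ n).coeff (j + 1)
      + ((n : ℝ) - j) * (laguerreL γ n).coeff j = 0 := by
  rcases lt_or_ge j n with hj | hj
  · rw [laguerreL_coeff_of_le γ (by omega : j + 1 ≤ n), laguerreL_coeff_of_le γ (by omega : j ≤ n)]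
    unfold lagC
    have hsplit : (∏ i ∈ Finset.Ico (j + 1) (n + 1), (γ + i))
        = (γ + (j+1 : ℕ)) * ∏ i ∈ Finset.Ico (j + 2) (n + 1), (γ + i) := by
      rw [Finset.prod_eq_prod_Ico_succ_bot (by omega : j + 1 < n + 1)]
    have hfac1 : ((j+1).factorial : ℝ) = (j+1) * (j.factorial : ℝ) := by
      rw [Nat.factorial_succ]; push_cast; ring
    have hnj : n - j = (n - (j+1)) + 1 := by omega
    have hfac2 : ((n - j).factorial : ℝ) = ((n:ℝ) - j) * ((n - (j+1)).factorial : ℝ) := by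
      rw [hnj, Nat.factorial_succ]
      have : ((n - (j+1) : ℕ) : ℝ) + 1 = (n : ℝ) - j := by
        have : ((n - (j+1) : ℕ) : ℝ) = (n : ℝ) - (j+1) := by
          push_cast [Nat.cast_sub (by omega : j + 1 ≤ n)]; ring
        rw [this]; ring
      rw [← this]; push_cast; ring
    rw [hsplit, hfac1, hfac2]
    have h1 : (j.factorial : ℝ) ≠ 0 := Nat.cast_ne_zero.2 (Nat.factorial_ne_zero _)
    have h2 : ((n - (j+1)).factorial : ℝ) ≠ 0 := Nat.cast_ne_zero.2 (Nat.factorial_ne_zero _)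
    have h3 : ((j:ℝ) + 1) ≠ 0 := by positivity
    have h4 : ((n:ℝ) - j) ≠ 0 := by
      have : (j:ℝ) < n := by exact_mod_cast hj
      nlinarith
    field_simp
    push_cast
    ring
  · rcases eq_or_lt_of_le hj with h | h
    · rw [laguerreL_coeff_of_gt γ (by omega : n < j + 1)]
      have : ((n:ℝ) - j) = 0 := by rw [h]; ring
      rw [this]; ring
    · rw [laguerreL_coeff_of_gt γ (by omega : n < j + 1), laguerreL_coeff_of_gt γ h]
      ring


lemma laguerreL_ode (γ : ℝ) (n : ℕ) :
    X * derivative (derivative (laguerreL γ n)) + C (γ + 1) * derivative (laguerreL γ n)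
      - X * derivative (laguerreL γ n) + C (n : ℝ) * laguerreL γ n = 0 := by
  set p := laguerreL γ n with hp
  ext k
  simp only [coeff_add, coeff_sub, coeff_C_mul, coeff_zero]
  match k with
  | 0 =>
    simp only [mul_coeff_zero, coeff_X_zero, zero_mul, coeff_derivative]
    have := lag_rec γ n 0
    push_cast at this ⊢
    linear_combination this
  | (j+1) =>
    simp only [coeff_X_mul, coeff_derivative]
    have := lag_rec γ n (j + 1)
    push_cast at this ⊢
    linear_combination this


lemma coeff_comp_neg_X (p : Polynomial ℝ) (k : ℕ) :
    (p.comp (-X)).coeff k = (-1 : ℝ) ^ k * p.coeff k := by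
  induction p using Polynomial.induction_on' with
  | add p q hp hq => simp [add_comp, hp, hq, mul_add]
  | monomial n a =>
    have h1 : ((monomial n a).comp (-X)) = C a * (-X) ^ n := by
      simp [Polynomial.comp, eval₂_monomial]
    have h2 : (-X : Polynomial ℝ) ^ n = C ((-1 : ℝ)^n) * X ^ n := by
      rw [neg_pow]; simp [C_neg, map_pow]
    rw [h1, h2, ← mul_assoc, ← C_mul, coeff_C_mul, coeff_X_pow, coeff_monomial]
    rcases eq_or_ne n k with rfl | h
    · simp [mul_comm]
    · simp [h, Ne.symm h]

noncomputable def qp (α : ℝ) (m : ℕ) : Polynomial ℝ := (laguerreL (-α) m).comp (-X)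

lemma qp_coeff (α : ℝ) (m k : ℕ) :
    (qp α m).coeff k = (-1 : ℝ) ^ k * (laguerreL (-α) m).coeff k :=
  coeff_comp_neg_X _ _

lemma qp_natDegree_le (α : ℝ) (m : ℕ) : (qp α m).natDegree ≤ m := by
  apply natDegree_le_iff_coeff_eq_zero.2
  intro k hk
  rw [qp_coeff]
  have : (laguerreL (-α) m).coeff k = 0 :=
    coeff_eq_zero_of_natDegree_lt (lt_of_le_of_lt (laguerreL_natDegree_le _ _) hk)
  rw [this, mul_zero]

lemma qp_ode (α : ℝ) (m : ℕ) :
    X * derivative (derivative (qp α m)) + C (1 - α) * derivative (qp α m)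
      + X * derivative (qp α m) - C (m : ℝ) * qp α m = 0 := by
  set p := laguerreL (-α) m with hpdef
  have hODE := laguerreL_ode (-α) m
  have hcomp : (X * derivative (derivative p) + C (-α + 1) * derivative p
      - X * derivative p + C (m : ℝ) * p).comp (-X) = 0 := by
    rw [← hpdef] at hODE; rw [hODE, zero_comp]
  simp only [add_comp, sub_comp, mul_comp, X_comp, C_comp] at hcomp
  have hd1 : derivative (qp α m) = -((derivative p).comp (-X)) := by
    unfold qp
    rw [derivative_comp]
    simp
    rfl
  have hd2 : derivative (derivative (qp α m)) = (derivative (derivative p)).comp (-X) := by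
    rw [hd1, derivative_neg, derivative_comp]
    simp
  have hq : qp α m = p.comp (-X) := rfl
  rw [hd2, hd1, hq, show (1 - α) = -α + 1 by ring]
  linear_combination (-1 : Polynomial ℝ) * hcomp


noncomputable def brk (N : ℕ) (f g : Polynomial ℝ) : Polynomial ℝ :=
  ∑ j ∈ Finset.range (N + 1), (-1 : ℝ) ^ j • (D^[j] f * D^[N - j] g)

lemma brk_add_left (N : ℕ) (f₁ f₂ g : Polynomial ℝ) :
    brk N (f₁ + f₂) g = brk N f₁ g + brk N f₂ g := by
  unfold brk
  rw [← Finset.sum_add_distrib]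
  refine Finset.sum_congr rfl fun j _ => ?_
  rw [iterate_map_add, add_mul, smul_add]

lemma brk_C_mul_left (N : ℕ) (c : ℝ) (f g : Polynomial ℝ) :
    brk N (C c * f) g = C c * brk N f g := by
  unfold brk
  rw [Finset.mul_sum]
  refine Finset.sum_congr rfl fun j _ => ?_
  rw [iterate_derivative_C_mul, smul_eq_C_mul, smul_eq_C_mul]
  ring

lemma brk_C_mul_right (N : ℕ) (c : ℝ) (f g : Polynomial ℝ) :
    brk N f (C c * g) = C c * brk N f g := by
  unfold brk
  rw [Finset.mul_sum]
  refine Finset.sum_congr rfl fun j _ => ?_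
  rw [iterate_derivative_C_mul, smul_eq_C_mul, smul_eq_C_mul]
  ring

lemma brk_add_right (N : ℕ) (f g₁ g₂ : Polynomial ℝ) :
    brk N f (g₁ + g₂) = brk N f g₁ + brk N f g₂ := by
  unfold brk
  rw [← Finset.sum_add_distrib]
  refine Finset.sum_congr rfl fun j _ => ?_
  rw [iterate_map_add, mul_add, smul_add]

lemma brk_neg_right (N : ℕ) (f g : Polynomial ℝ) : brk N f (-g) = - brk N f g := by
  have := brk_C_mul_right N (-1) f g
  simpa using this

/-- the key telescoping computation -/
lemma brk_pair (N : ℕ) (f g : Polynomial ℝ) :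
    brk N (D f) g + brk N f (D g)
      = f * D^[N + 1] g + (-1 : ℝ) ^ N • (D^[N + 1] f * g) := by
  set u : ℕ → Polynomial ℝ := fun j => (-1 : ℝ) ^ j • (D^[j] f * D^[N + 1 - j] g) with hu
  have key : ∀ j ∈ Finset.range (N + 1),
      (-1 : ℝ) ^ j • (D^[j] (D f) * D^[N - j] g) + (-1 : ℝ) ^ j • (D^[j] f * D^[N - j] (D g))
        = u j - u (j + 1) := by
    intro j hj
    rw [Finset.mem_range] at hj
    have h1 : D^[j] (D f) = D^[j + 1] f := (Function.iterate_succ_apply _ _ _).symm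
    have h2 : D^[N - j] (D g) = D^[N - j + 1] g := (Function.iterate_succ_apply _ _ _).symm
    have h3 : N + 1 - j = (N - j) + 1 := by omega
    have h4 : N + 1 - (j + 1) = N - j := by omega
    rw [hu]
    simp only [h1, h2, h3, h4, pow_succ]
    have h5 : ((-1:ℝ) ^ j * -1) • (D^[j+1] f * D^[N-j] g)
        = -((-1:ℝ) ^ j • (D^[j+1] f * D^[N-j] g)) := by
      rw [mul_comm, ← smul_smul]; simp
    rw [h5]
    abel
  have hsum : brk N (D f) g + brk N f (D g)
      = ∑ j ∈ Finset.range (N + 1), (u j - u (j + 1)) := by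
    unfold brk
    rw [← Finset.sum_add_distrib]
    exact Finset.sum_congr rfl key
  rw [hsum, Finset.sum_range_sub' u (N + 1), hu]
  simp only [pow_zero, one_smul, Function.iterate_zero_apply, Nat.sub_zero, Nat.sub_self,
    pow_succ]
  have : ((-1:ℝ) ^ N * -1) • (D^[N+1] f * g) = -((-1:ℝ) ^ N • (D^[N+1] f * g)) := by
    rw [mul_comm, ← smul_smul]; simp
  rw [this]
  ring


lemma brk_pair_zero (N : ℕ) {f g : Polynomial ℝ}
    (hf : f.natDegree ≤ N) (hg : g.natDegree ≤ N) :
    brk N (D f) g + brk N f (D g) = 0 := by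
  rw [brk_pair,
    Polynomial.iterate_derivative_eq_zero (Nat.lt_succ_of_le hf),
    Polynomial.iterate_derivative_eq_zero (Nat.lt_succ_of_le hg)]
  simp

lemma brk_D_left (N : ℕ) {f g : Polynomial ℝ}
    (hf : f.natDegree ≤ N) (hg : g.natDegree ≤ N) :
    brk N (D f) g = - brk N f (D g) :=
  eq_neg_of_add_eq_zero_left (brk_pair_zero N hf hg)

lemma derivative_brk (N : ℕ) (f g : Polynomial ℝ) :
    D (brk N f g) = brk N (D f) g + brk N f (D g) := by
  unfold brk
  rw [derivative_sum, ← Finset.sum_add_distrib]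
  refine Finset.sum_congr rfl fun j _ => ?_
  rw [derivative_smul, derivative_mul, smul_add]
  congr 2
  · rw [← Function.iterate_succ_apply' D j f, Function.iterate_succ_apply D j f]
  · rw [← Function.iterate_succ_apply' D (N-j) g, Function.iterate_succ_apply D (N-j) g]

lemma brk_const (N : ℕ) {f g : Polynomial ℝ}
    (hf : f.natDegree ≤ N) (hg : g.natDegree ≤ N) :
    brk N f g = C ((brk N f g).coeff 0) :=
  Polynomial.eq_C_of_derivative_eq_zero
    (by rw [derivative_brk, brk_pair_zero N hf hg])

lemma iter_D_X_mul (h : Polynomial ℝ) (j : ℕ) :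
    D^[j] (X * h) = X * D^[j] h + (j : ℝ) • D^[j - 1] h := by
  induction j with
  | zero => simp
  | succ j ih =>
    rw [Function.iterate_succ_apply', ih, derivative_add, derivative_mul, derivative_X,
      derivative_smul]
    rcases Nat.eq_zero_or_pos j with rfl | hj
    · simp [← Function.iterate_succ_apply' D 0 h]; abel
    · have h1 : D (D^[j-1] h) = D^[j] h := by
        rw [← Function.iterate_succ_apply' D (j-1) h]
        congr 1
        omega
      rw [h1, ← Function.iterate_succ_apply' D j h]
      have : ((j : ℝ) + 1) = ((j + 1 : ℕ) : ℝ) := by push_cast; ring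
      push_cast
      rw [add_smul, one_smul]
      rw [one_mul]
      abel


lemma smul_iter_pred (h : Polynomial ℝ) (j : ℕ) :
    (j : ℝ) • D^[j - 1] (D h) = (j : ℝ) • D^[j] h := by
  rcases Nat.eq_zero_or_pos j with rfl | hj
  · simp
  · congr 1
    rw [← Function.iterate_succ_apply D (j-1) h]
    congr 1
    omega

lemma brk_xd (N : ℕ) {f g : Polynomial ℝ}
    (hf : f.natDegree ≤ N) (hg : g.natDegree ≤ N) :
    brk N (X * D f) g + brk N f (X * D g) = (N : ℝ) • brk N f g := by
  have main : brk N (X * D f) g + brk N f (X * D g)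
      = X * (brk N (D f) g + brk N f (D g)) + (N : ℝ) • brk N f g := by
    unfold brk
    rw [← Finset.sum_add_distrib, ← Finset.sum_add_distrib, Finset.smul_sum, Finset.mul_sum,
      ← Finset.sum_add_distrib]
    refine Finset.sum_congr rfl fun j hj => ?_
    rw [Finset.mem_range] at hj
    rw [iter_D_X_mul (D f) j, iter_D_X_mul (D g) (N - j), smul_iter_pred f j,
      smul_iter_pred g (N - j)]
    have hN : (N : ℝ) = (j : ℝ) + ((N - j : ℕ) : ℝ) := by
      have : ((N - j : ℕ) : ℝ) = (N : ℝ) - j := by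
        rw [Nat.cast_sub (by omega)]
      rw [this]; ring
    rw [hN]
    simp only [smul_eq_C_mul, map_add]
    ring
  rw [main, brk_pair_zero N hf hg, mul_zero, zero_add]


lemma natDegree_D_le (p : Polynomial ℝ) : (D p).natDegree ≤ p.natDegree :=
  (natDegree_derivative_le p).trans (Nat.sub_le _ 1)

lemma natDegree_X_mul_D_le (p : Polynomial ℝ) : (X * D p).natDegree ≤ p.natDegree := by
  rcases eq_or_ne (D p) 0 with h | h
  · simp [h]
  · have h0 : p.natDegree ≠ 0 := by
      intro h0
      exact h (by rw [Polynomial.eq_C_of_natDegree_eq_zero h0]; simp)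
    have h1 : (D p).natDegree < p.natDegree := natDegree_derivative_lt h0
    exact (natDegree_mul_le).trans (by rw [natDegree_X]; omega)

lemma brk_eigen (α : ℝ) (N m n : ℕ) (hm : m ≤ N) (hn : n ≤ N) :
    ((m : ℝ) + n - N) • brk N (qp α m) (laguerreL (α - N - 1) n) = 0 := by
  set q := qp α m with hqdef
  set L := laguerreL (α - N - 1) n with hLdef
  have hq : q.natDegree ≤ N := (qp_natDegree_le α m).trans hm
  have hL : L.natDegree ≤ N := (laguerreL_natDegree_le _ n).trans hn
  have hq' : (D q).natDegree ≤ N := (natDegree_D_le q).trans hq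
  have hXDL : (X * D L).natDegree ≤ N := (natDegree_X_mul_D_le L).trans hL
  set B := brk N q L with hBdef
  -- the q equation
  have hqe : C (m : ℝ) * q = X * D (D q) + C (1 - α) * D q + X * D q := by
    linear_combination - qp_ode α m
  -- the L equation
  have hLe : X * D (D L) + C (α - N) * D L - X * D L = - (C (n:ℝ) * L) := by
    have h := laguerreL_ode (α - N - 1) n
    have hc : (α - (N:ℝ) - 1 + 1) = α - N := by ring
    rw [hc] at h
    linear_combination h
  -- step 1
  have h1 : brk N (X * D (D q)) L = (N : ℝ) • brk N (D q) L - brk N (D q) (X * D L) := by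
    have h := brk_xd N hq' hL
    simp only [smul_eq_C_mul] at h ⊢
    linear_combination h
  have h3 : brk N (X * D q) L = (N : ℝ) • B - brk N q (X * D L) := by
    have h := brk_xd N hq hL
    simp only [smul_eq_C_mul] at h ⊢
    linear_combination h
  have h4 : brk N (D q) L = - brk N q (D L) := brk_D_left N hq hL
  have h5 : brk N (D q) (X * D L) = - brk N q (D (X * D L)) := brk_D_left N hq hXDL
  have h6 : D (X * D L) = D L + X * D (D L) := by
    rw [derivative_mul, derivative_X, one_mul]
  have hsub : ∀ g₁ g₂ : Polynomial ℝ, brk N q (g₁ - g₂) = brk N q g₁ - brk N q g₂ := by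
    intro g₁ g₂
    have hneg : brk N q (-g₂) = - brk N q g₂ := by
      have := brk_C_mul_right N (-1) q g₂
      simpa using this
    rw [sub_eq_add_neg, brk_add_right, hneg, sub_eq_add_neg]
  set B1 := brk N q (D L) with hB1
  set B2 := brk N q (X * D (D L)) with hB2
  set B3 := brk N q (X * D L) with hB3
  have hLbrk : B2 + C (α - N) * B1 - B3 = - (C (n:ℝ) * B) := by
    have h := congrArg (brk N q) hLe
    rw [hsub, brk_add_right, brk_C_mul_right] at h
    have hneg : brk N q (-(C (n:ℝ) * L)) = - (C (n:ℝ) * brk N q L) := by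
      have h2 := brk_C_mul_right N (-(n:ℝ)) q L
      have h3 : C (-(n:ℝ)) * L = -(C (n:ℝ) * L) := by
        rw [map_neg]; ring
      rw [h3] at h2
      rw [h2, map_neg]; ring
    rw [hneg] at h
    exact h
  -- assemble
  have main : C (m : ℝ) * B = C (N : ℝ) * B - C (n : ℝ) * B := by
    have e1 : C (m:ℝ) * B = brk N (C (m:ℝ) * q) L := (brk_C_mul_left N _ q L).symm
    rw [hqe, brk_add_left, brk_add_left, brk_C_mul_left, h1, h3, h4, h5, h6,
      brk_add_right] at e1
    simp only [smul_eq_C_mul, map_sub, map_one, map_natCast] at e1 hLbrk ⊢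
    linear_combination e1 + hLbrk
  simp only [smul_eq_C_mul, map_sub, map_add, map_natCast] at main ⊢
  linear_combination main


lemma coeff_zero_iter_D (p : Polynomial ℝ) (j : ℕ) :
    (D^[j] p).coeff 0 = (j.factorial : ℝ) * p.coeff j := by
  rw [Polynomial.coeff_iterate_derivative]
  simp [Nat.descFactorial_self, nsmul_eq_mul]

lemma brk_duality (α : ℝ) (N m n : ℕ) (hm : m ≤ N) (hn : n ≤ N) :
    brk N (qp α m) (laguerreL (α - N - 1) n)
      = if m + n = N then C ((-1 : ℝ) ^ N) else 0 := by
  set q := qp α m with hqdef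
  set L := laguerreL (α - N - 1) n with hLdef
  have hq : q.natDegree ≤ N := (qp_natDegree_le α m).trans hm
  have hL : L.natDegree ≤ N := (laguerreL_natDegree_le _ n).trans hn
  rcases eq_or_ne (m + n) N with hmn | hmn
  · rw [if_pos hmn]
    rw [brk_const N hq hL]
    congr 1
    unfold brk
    rw [finset_sum_coeff]
    have hval : ∀ j ∈ Finset.range (N+1), ((-1 : ℝ) ^ j • (D^[j] q * D^[N - j] L)).coeff 0
        = (-1:ℝ)^j * ((j.factorial : ℝ) * q.coeff j) * (((N-j).factorial : ℝ) * L.coeff (N-j)) := by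
      intro j _
      rw [Polynomial.coeff_smul, Polynomial.mul_coeff_zero, coeff_zero_iter_D, coeff_zero_iter_D]
      simp [smul_eq_mul]; ring
    rw [Finset.sum_congr rfl hval]
    rw [Finset.sum_eq_single m]
    · have hq_m : q.coeff m = (-1:ℝ)^m * ((-1:ℝ)^m / (m.factorial : ℝ)) := by
        rw [hqdef, qp_coeff, laguerreL_leadingCoeff]
      have hNm : N - m = n := by omega
      have hL_n : L.coeff (N - m) = (-1:ℝ)^n / (n.factorial : ℝ) := by
        rw [hNm, hLdef, laguerreL_leadingCoeff]
      rw [hq_m, hL_n, hNm]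
      have h1 : (m.factorial : ℝ) ≠ 0 := Nat.cast_ne_zero.2 (Nat.factorial_ne_zero _)
      have h2 : (n.factorial : ℝ) ≠ 0 := Nat.cast_ne_zero.2 (Nat.factorial_ne_zero _)
      have h3 : ((-1:ℝ))^(m*3) = (-1:ℝ)^m := by rw [pow_mul']; norm_num
      field_simp
      rw [← hmn, pow_add]
      ring_nf
      rw [h3]
    · intro b hb hbm
      rcases lt_or_gt_of_ne hbm with h | h
      · have hLn : L.natDegree ≤ n := by rw [hLdef]; exact laguerreL_natDegree_le _ n
        have : L.coeff (N - b) = 0 := by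
          apply coeff_eq_zero_of_natDegree_lt
          omega
        rw [this]; ring
      · have hqm : q.natDegree ≤ m := by rw [hqdef]; exact qp_natDegree_le α m
        have : q.coeff b = 0 := by
          apply coeff_eq_zero_of_natDegree_lt
          omega
        rw [this]; ring
    · intro h
      exact absurd (Finset.mem_range.2 (by omega)) h
  · rw [if_neg hmn]
    have h := brk_eigen α N m n hm hn
    have hc : ((m : ℝ) + n - N) ≠ 0 := by
      intro h0
      apply hmn
      have : ((m + n : ℕ) : ℝ) = (N : ℝ) := by push_cast; linarith
      exact_mod_cast this
    rcases smul_eq_zero.mp h with h0 | h0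
    · exact absurd h0 hc
    · exact h0


lemma jacobi_minor {R : Type*} [CommRing R] {n b a : ℕ}
    (Xm Cm : Matrix (Fin n) (Fin n) R) (h : Xm * Cm = 1)
    (er ec : (Fin b ⊕ Fin a) ≃ Fin n) :
    ∃ ε : R, (ε = 1 ∨ ε = -1) ∧
      (Cm.submatrix (⇑ec ∘ Sum.inr) (⇑er ∘ Sum.inr)).det * Xm.det
        = ε * (Xm.submatrix (⇑er ∘ Sum.inl) (⇑ec ∘ Sum.inl)).det := by
  set P := Xm.submatrix ⇑er ⇑ec with hPdef
  set Ct := Cm.submatrix ⇑ec ⇑er with hCtdef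
  have hPC : P * Ct = 1 := by
    rw [hPdef, hCtdef, Matrix.submatrix_mul_equiv Xm Cm _ ec _, h,
      Matrix.submatrix_one_equiv]
  -- block identities
  have hP : P = Matrix.fromBlocks P.toBlocks₁₁ P.toBlocks₁₂ P.toBlocks₂₁ P.toBlocks₂₂ :=
    (Matrix.fromBlocks_toBlocks P).symm
  have hCt : Ct = Matrix.fromBlocks Ct.toBlocks₁₁ Ct.toBlocks₁₂ Ct.toBlocks₂₁ Ct.toBlocks₂₂ :=
    (Matrix.fromBlocks_toBlocks Ct).symm
  have hPC' : Matrix.fromBlocks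
        (P.toBlocks₁₁ * Ct.toBlocks₁₁ + P.toBlocks₁₂ * Ct.toBlocks₂₁)
        (P.toBlocks₁₁ * Ct.toBlocks₁₂ + P.toBlocks₁₂ * Ct.toBlocks₂₂)
        (P.toBlocks₂₁ * Ct.toBlocks₁₁ + P.toBlocks₂₂ * Ct.toBlocks₂₁)
        (P.toBlocks₂₁ * Ct.toBlocks₁₂ + P.toBlocks₂₂ * Ct.toBlocks₂₂)
      = Matrix.fromBlocks 1 0 0 1 := by
    rw [← Matrix.fromBlocks_multiply, ← hP, ← hCt, hPC, Matrix.fromBlocks_one]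
  have h12 : P.toBlocks₁₁ * Ct.toBlocks₁₂ + P.toBlocks₁₂ * Ct.toBlocks₂₂ = 0 := by
    have h' := congrArg Matrix.toBlocks₁₂ hPC'
    rw [Matrix.toBlocks_fromBlocks₁₂] at h'
    rw [Matrix.toBlocks_fromBlocks₁₂] at h'
    exact h'
  have h22 : P.toBlocks₂₁ * Ct.toBlocks₁₂ + P.toBlocks₂₂ * Ct.toBlocks₂₂ = 1 := by
    have h' := congrArg Matrix.toBlocks₂₂ hPC'
    rw [Matrix.toBlocks_fromBlocks₂₂] at h'
    rw [Matrix.toBlocks_fromBlocks₂₂] at h'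
    exact h'
  have hmul : P * Matrix.fromBlocks 1 Ct.toBlocks₁₂ 0 Ct.toBlocks₂₂
      = Matrix.fromBlocks P.toBlocks₁₁ 0 P.toBlocks₂₁ 1 := by
    conv_lhs => rw [hP]
    rw [Matrix.fromBlocks_multiply]
    rw [h12, h22]
    simp
  have hdet : P.det * Ct.toBlocks₂₂.det = P.toBlocks₁₁.det := by
    have := congrArg Matrix.det hmul
    rw [Matrix.det_mul, Matrix.det_fromBlocks_zero₂₁, Matrix.det_fromBlocks_zero₁₂] at this
    simpa using this
  -- det P = sign * det Xm
  set σ : Equiv.Perm (Fin b ⊕ Fin a) := ec.trans er.symm with hσ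
  have hfun : (⇑er ∘ ⇑σ) = ⇑ec := by funext x; simp [hσ]
  have hPperm : P = (Xm.submatrix ⇑er ⇑er).submatrix id ⇑σ := by
    rw [Matrix.submatrix_submatrix, Function.comp_id, hfun]
  have hdetP : P.det = (Equiv.Perm.sign σ : ℤ) * Xm.det := by
    rw [hPperm, Matrix.det_permute', Matrix.det_submatrix_equiv_self]
  rcases Int.units_eq_one_or (Equiv.Perm.sign σ) with hs | hs
  · refine ⟨1, Or.inl rfl, ?_⟩
    have h1 : P.det = Xm.det := by rw [hdetP, hs]; simp
    have h2 : Ct.toBlocks₂₂ = Cm.submatrix (⇑ec ∘ Sum.inr) (⇑er ∘ Sum.inr) := rfl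
    have h3 : P.toBlocks₁₁ = Xm.submatrix (⇑er ∘ Sum.inl) (⇑ec ∘ Sum.inl) := rfl
    rw [← h2, ← h3, one_mul, ← hdet, h1, mul_comm]
  · refine ⟨-1, Or.inr rfl, ?_⟩
    have h1 : P.det = - Xm.det := by rw [hdetP, hs]; simp
    have h2 : Ct.toBlocks₂₂ = Cm.submatrix (⇑ec ∘ Sum.inr) (⇑er ∘ Sum.inr) := rfl
    have h3 : P.toBlocks₁₁ = Xm.submatrix (⇑er ∘ Sum.inl) (⇑ec ∘ Sum.inl) := rfl
    rw [← h2, ← h3, ← hdet, h1]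
    ring


/-- the polynomial Wronskian identity for the radial oscillator:
`W[η ↦ L_{d₁}^{(−α)}(−η),…] ∝ W[L_{e₁}^{(α−N−1)},…]` where `e₁ < … < e_{N+1−M}`
enumerate `{0,…,N} \ {N−d₁,…,N−d_M}`. -/
theorem laguerre_wronskian_identity
    (α : ℝ) (hα : ∀ m : ℤ, 2 * α ≠ (m : ℝ))
    (M N : ℕ) (d : Fin M → ℕ) (hd : Function.Injective d)
    (hdN : ∀ j, d j ≤ N)
    (e : Fin (N + 1 - M) → ℕ) (he : StrictMono e)
    (hrange : ∀ k : ℕ, (∃ i, e i = k) ↔ (k ≤ N ∧ ∀ j, k ≠ N - d j)) :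
    ∃ c : ℝ, c ≠ 0 ∧
      polyWronskian M (fun j => (laguerreL (-α) (d j)).comp (-X))
        = Polynomial.C c
            * polyWronskian (N + 1 - M) (fun i => laguerreL (α - N - 1) (e i)) := by
  -- basic facts
  have he_le : ∀ i, e i ≤ N := fun i => ((hrange (e i)).mp ⟨i, rfl⟩).1
  have he_ne : ∀ i j, e i ≠ N - d j := fun i => ((hrange (e i)).mp ⟨i, rfl⟩).2
  have hM : M ≤ N + 1 := by
    have hinj : Function.Injective (fun j : Fin M => (⟨d j, by have := hdN j; omega⟩ : Fin (N+1))) := by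
      intro x y hxy
      apply hd
      simpa using hxy
    simpa using Fintype.card_le_of_injective _ hinj
  -- the two matrices
  set Xm : Matrix (Fin (N+1)) (Fin (N+1)) (Polynomial ℝ) :=
    Matrix.of (fun m j : Fin (N+1) => D^[(j:ℕ)] (qp α (m:ℕ))) with hXm
  set H : Matrix (Fin (N+1)) (Fin (N+1)) (Polynomial ℝ) :=
    Matrix.of (fun j m : Fin (N+1) =>
      C ((-1:ℝ)^(N + (j:ℕ))) * D^[N - (j:ℕ)] (laguerreL (α - N - 1) (N - (m:ℕ)))) with hH
  -- duality: Xm * H = 1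
  have hXH : Xm * H = 1 := by
    ext m n
    rw [Matrix.mul_apply, Matrix.one_apply]
    have hsum : ∀ j : Fin (N+1), Xm m j * H j n
        = C ((-1:ℝ)^N) * ((-1:ℝ)^(j:ℕ) • (D^[(j:ℕ)] (qp α (m:ℕ))
            * D^[N - (j:ℕ)] (laguerreL (α - N - 1) (N - (n:ℕ))))) := by
      intro j
      rw [hXm, hH]
      simp only [Matrix.of_apply, smul_eq_C_mul, pow_add, map_mul]
      ring
    rw [Finset.sum_congr rfl (fun j _ => hsum j), ← Finset.mul_sum]
    have hbrk : ∑ j : Fin (N+1), ((-1:ℝ)^(j:ℕ) • (D^[(j:ℕ)] (qp α (m:ℕ))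
            * D^[N - (j:ℕ)] (laguerreL (α - N - 1) (N - (n:ℕ)))))
        = brk N (qp α (m:ℕ)) (laguerreL (α - N - 1) (N - (n:ℕ))) := by
      rw [brk]
      rw [Fin.sum_univ_eq_sum_range (fun j => ((-1:ℝ)^j • (D^[j] (qp α (m:ℕ))
            * D^[N - j] (laguerreL (α - N - 1) (N - (n:ℕ)))))) (N+1)]
    rw [hbrk, brk_duality α N (m:ℕ) (N - (n:ℕ)) (by have := m.isLt; omega) (by omega)]
    rcases eq_or_ne m n with rfl | hmn
    · rw [if_pos (by have := m.isLt; omega), if_pos rfl, ← map_mul, ← pow_add, Even.neg_one_pow ⟨N, rfl⟩, map_one]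
    · have hne : ¬ ((m:ℕ) + (N - (n:ℕ)) = N) := by
        have h1 : (m:ℕ) ≠ (n:ℕ) := fun h => hmn (Fin.ext h)
        have := m.isLt; have := n.isLt
        omega
      rw [if_neg hne, if_neg hmn, mul_zero]
  -- the two equivalences
  have f_inj : Function.Injective (Sum.elim
      (fun j : Fin M => (⟨d j, by have := hdN j; omega⟩ : Fin (N+1)))
      (fun t : Fin (N + 1 - M) => (⟨N - e t, by omega⟩ : Fin (N+1)))) := by
    intro x y hxy
    match x, y with
    | Sum.inl x, Sum.inl y =>
      simp only [Sum.elim_inl, Fin.mk.injEq] at hxy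
      exact congrArg Sum.inl (hd hxy)
    | Sum.inl x, Sum.inr y =>
      exfalso
      simp only [Sum.elim_inl, Sum.elim_inr, Fin.mk.injEq] at hxy
      have h1 := he_le y; have h2 := he_ne y x; have h3 := hdN x
      omega
    | Sum.inr x, Sum.inl y =>
      exfalso
      simp only [Sum.elim_inl, Sum.elim_inr, Fin.mk.injEq] at hxy
      have h1 := he_le x; have h2 := he_ne x y; have h3 := hdN y
      omega
    | Sum.inr x, Sum.inr y =>
      simp only [Sum.elim_inr, Fin.mk.injEq] at hxy
      have h1 := he_le x; have h2 := he_le y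
      have h3 : e x = e y := by omega
      exact congrArg Sum.inr (he.injective h3)
  have card_eq : Fintype.card (Fin M ⊕ Fin (N + 1 - M)) = Fintype.card (Fin (N+1)) := by
    simp only [Fintype.card_sum, Fintype.card_fin]
    omega
  set er : (Fin M ⊕ Fin (N + 1 - M)) ≃ Fin (N+1) := Equiv.ofBijective _
    ((Fintype.bijective_iff_injective_and_card _).2 ⟨f_inj, card_eq⟩) with her
  have g_inj : Function.Injective (Sum.elim
      (fun j : Fin M => (⟨(j:ℕ), by have := j.isLt; omega⟩ : Fin (N+1)))
      (fun s : Fin (N + 1 - M) => (⟨N - (s:ℕ), by omega⟩ : Fin (N+1)))) := by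
    intro x y hxy
    match x, y with
    | Sum.inl x, Sum.inl y =>
      simp only [Sum.elim_inl, Fin.mk.injEq] at hxy
      exact congrArg Sum.inl (Fin.ext hxy)
    | Sum.inl x, Sum.inr y =>
      exfalso
      simp only [Sum.elim_inl, Sum.elim_inr, Fin.mk.injEq] at hxy
      have h1 := x.isLt; have h2 := y.isLt
      omega
    | Sum.inr x, Sum.inl y =>
      exfalso
      simp only [Sum.elim_inl, Sum.elim_inr, Fin.mk.injEq] at hxy
      have h1 := y.isLt; have h2 := x.isLt
      omega
    | Sum.inr x, Sum.inr y =>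
      simp only [Sum.elim_inr, Fin.mk.injEq] at hxy
      have h1 := x.isLt; have h2 := y.isLt
      exact congrArg Sum.inr (Fin.ext (by omega))
  set ec : (Fin M ⊕ Fin (N + 1 - M)) ≃ Fin (N+1) := Equiv.ofBijective _
    ((Fintype.bijective_iff_injective_and_card _).2 ⟨g_inj, card_eq⟩) with hec
  -- identify the minors
  have hXsub : (Xm.submatrix (⇑er ∘ Sum.inl) (⇑ec ∘ Sum.inl)).det
      = polyWronskian M (fun j => (laguerreL (-α) (d j)).comp (-X)) := by
    rw [polyWronskian, ← Matrix.det_transpose (Xm.submatrix (⇑er ∘ Sum.inl) (⇑ec ∘ Sum.inl))]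
    rfl
  have hε₂0 : (∏ s : Fin (N + 1 - M), (-1:ℝ)^(N + (N - (s:ℕ)))) ≠ 0 := by
    apply Finset.prod_ne_zero_iff.2
    intro s _
    exact pow_ne_zero _ (by norm_num)
  have hHsub : (H.submatrix (⇑ec ∘ Sum.inr) (⇑er ∘ Sum.inr)).det
      = C (∏ s : Fin (N + 1 - M), (-1:ℝ)^(N + (N - (s:ℕ))))
          * polyWronskian (N + 1 - M) (fun i => laguerreL (α - N - 1) (e i)) := by
    have hentry : H.submatrix (⇑ec ∘ Sum.inr) (⇑er ∘ Sum.inr)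
        = Matrix.of (fun s t : Fin (N + 1 - M) => (C ((-1:ℝ)^(N + (N - (s:ℕ))))) *
            (Matrix.of fun j k : Fin (N + 1 - M) =>
              (fun q : Polynomial ℝ => derivative q)^[(j:ℕ)]
                (laguerreL (α - N - 1) (e k))) s t) := by
      refine Matrix.ext (fun s t => ?_)
      have h1 : N - (N - (s:ℕ)) = (s:ℕ) := by have := s.isLt; omega
      have h2 : N - (N - e t) = e t := by have := he_le t; omega
      show H (ec (Sum.inr s)) (er (Sum.inr t)) = _
      have h3 : ec (Sum.inr s) = ⟨N - (s:ℕ), by omega⟩ := rfl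
      have h4 : er (Sum.inr t) = ⟨N - e t, by omega⟩ := rfl
      rw [h3, h4, hH]
      simp only [Matrix.of_apply]
      rw [h1, h2]
    rw [hentry, Matrix.det_mul_column, polyWronskian,
      ← map_prod C (fun s : Fin (N + 1 - M) => (-1:ℝ)^(N + (N - (s:ℕ)))) Finset.univ]
  -- det Xm is a nonzero constant
  have hdetX : ∃ u : ℝ, u ≠ 0 ∧ Xm.det = C u := by
    have hu : IsUnit Xm.det := by
      apply IsUnit.of_mul_eq_one H.det
      rw [← Matrix.det_mul, hXH, Matrix.det_one]
    rcases Polynomial.isUnit_iff.mp hu with ⟨u, hu1, hu2⟩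
    exact ⟨u, hu1.ne_zero, hu2.symm⟩
  obtain ⟨ε, hεcases, heq⟩ := jacobi_minor Xm H hXH er ec
  obtain ⟨u, hu0, hdetXu⟩ := hdetX
  obtain ⟨εr, hεr0, hεrC, hεrsq⟩ : ∃ εr : ℝ, εr ≠ 0 ∧ ε = C εr ∧ εr * εr = 1 := by
    rcases hεcases with rfl | rfl
    · exact ⟨1, one_ne_zero, (map_one C).symm, by ring⟩
    · exact ⟨-1, by norm_num, by simp, by ring⟩
  refine ⟨εr * (∏ s : Fin (N + 1 - M), (-1:ℝ)^(N + (N - (s:ℕ)))) * u,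
    mul_ne_zero (mul_ne_zero hεr0 hε₂0) hu0, ?_⟩
  rw [hHsub, hXsub, hdetXu, hεrC] at heq
  have hCsq : C εr * C εr = 1 := by rw [← map_mul, hεrsq, map_one]
  calc polyWronskian M (fun j => (laguerreL (-α) (d j)).comp (-X))
      = (C εr * C εr) * polyWronskian M (fun j => (laguerreL (-α) (d j)).comp (-X)) := by
        rw [hCsq, one_mul]
    _ = C εr * (C εr * polyWronskian M (fun j => (laguerreL (-α) (d j)).comp (-X))) := by
        ring
    _ = C εr * (C (∏ s : Fin (N + 1 - M), (-1:ℝ)^(N + (N - (s:ℕ))))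
          * polyWronskian (N + 1 - M) (fun i => laguerreL (α - N - 1) (e i)) * C u) := by
        rw [← heq]
    _ = C (εr * (∏ s : Fin (N + 1 - M), (-1:ℝ)^(N + (N - (s:ℕ)))) * u)
          * polyWronskian (N + 1 - M) (fun i => laguerreL (α - N - 1) (e i)) := by
        rw [map_mul, map_mul]
        ring
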